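/- Let F be a field of characteristic 0 and let B be an n×n symmetric matrix over F with qpr(B) = q_1 q_2 ⋯ q_{n−1} A, where q_k ∈ {A, S} for k = 1, …, n−1. Then there exists an (n+1)×(n+1) symmetric matrix B' over F such that qpr(B') = q_1 q_2 ⋯ q_{n−1} A A. -/

import Mathlib

open Matrix

/-- The minor of a square matrix `B` lying in the rows indexed by `α` and the columns
indexed by `β` (each listed in increasing order); junk value `0` if `α.card ≠ β.card`. -/
def qMinor {R : Type*} [CommRing R] {m : Type*} [Fintype m] [LinearOrder m]
    (B : Matrix m m R) (α β : Finset m) : R :=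
  if h : β.card = α.card then
    (Matrix.of fun i j : Fin α.card =>
      B (α.orderEmbOfFin rfl i) (β.orderEmbOfFin h j)).det
  else 0

/-- `α` and `β` index a quasi-principal submatrix of order `k`, i.e.
`|α| = |β| = k` and `k - 1 ≤ |α ∩ β| (≤ k)`. -/
def IsQPPair {m : Type*} [DecidableEq m] (k : ℕ) (α β : Finset m) : Prop :=
  α.card = k ∧ β.card = k ∧ k - 1 ≤ (α ∩ β).card

/-- All quasi-principal minors of `B` of order `k` are nonzero. -/
def QPAllNonzero {R : Type*} [CommRing R] {m : Type*} [Fintype m] [LinearOrder m]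
    (B : Matrix m m R) (k : ℕ) : Prop :=
  ∀ α β : Finset m, IsQPPair k α β → qMinor B α β ≠ 0

/-- All quasi-principal minors of `B` of order `k` are zero. -/
def QPAllZero {R : Type*} [CommRing R] {m : Type*} [Fintype m] [LinearOrder m]
    (B : Matrix m m R) (k : ℕ) : Prop :=
  ∀ α β : Finset m, IsQPPair k α β → qMinor B α β = 0

/-- The three possible letters of a qpr-sequence. -/
inductive QPR : Type
  | A
  | S
  | N
deriving DecidableEq

open Classical in
/-- The letter of the qpr-sequence of `B` corresponding to order `k`:
`A` if all quasi-principal minors of order `k` are nonzero, `N` if all are zero,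
and `S` otherwise. -/
noncomputable def qprEntry {R : Type*} [CommRing R] {m : Type*} [Fintype m] [LinearOrder m]
    (B : Matrix m m R) (k : ℕ) : QPR :=
  if QPAllNonzero B k then QPR.A
  else if QPAllZero B k then QPR.N
  else QPR.S

/-- A sequence of letters `q 0, …, q (n-1)` (standing for `q_1 ⋯ q_n`) is attainable
over `F` if it is the qpr-sequence of an `n × n` symmetric matrix over `F`. -/
def Attainable (F : Type*) [Field F] {n : ℕ} (q : Fin n → QPR) : Prop :=
  ∃ B : Matrix (Fin n) (Fin n) F, B.IsSymm ∧ ∀ k : Fin n, qprEntry B ((k : ℕ) + 1) = q k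

/-- The Schur complement `B/B[γ] = B[γᶜ] - B[γᶜ, γ] B[γ]⁻¹ B[γ, γᶜ]`,
with rows and columns indexed by `γᶜ` (indexing inherited from `B`). -/
noncomputable def schurCompl {R : Type*} [CommRing R] {n : ℕ}
    (B : Matrix (Fin n) (Fin n) R) (γ : Finset (Fin n)) :
    Matrix ↥(γᶜ) ↥(γᶜ) R :=
  B.submatrix (fun i : ↥(γᶜ) => (i : Fin n)) (fun j : ↥(γᶜ) => (j : Fin n)) -
    B.submatrix (fun i : ↥(γᶜ) => (i : Fin n)) (fun j : ↥γ => (j : Fin n)) *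
      (B.submatrix (fun i : ↥γ => (i : Fin n)) fun j : ↥γ => (j : Fin n))⁻¹ *
      B.submatrix (fun i : ↥γ => (i : Fin n)) fun j : ↥(γᶜ) => (j : Fin n)

/-- The `(m+1) × (m+1)` matrix with block form `[[A, x], [yᵀ, b]]`. -/
def borderMat {R : Type*} [CommRing R] {m : ℕ} (A : Matrix (Fin m) (Fin m) R)
    (x y : Fin m → R) (b : R) : Matrix (Fin (m + 1)) (Fin (m + 1)) R :=
  Matrix.of fun i j =>
    if hi : (i : ℕ) < m then
      if hj : (j : ℕ) < m then A ⟨i, hi⟩ ⟨j, hj⟩ else x ⟨i, hi⟩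
    else
      if hj : (j : ℕ) < m then y ⟨j, hj⟩ else b

section Aux

variable {R : Type*} [CommRing R] {m : Type*} [Fintype m] [LinearOrder m]

lemma qMinor_eq_det (B : Matrix m m R) {α β : Finset m} {k : ℕ}
    (hα : α.card = k) (hβ : β.card = k) :
    qMinor B α β = (B.submatrix (α.orderEmbOfFin hα) (β.orderEmbOfFin hβ)).det := by
  subst hα
  rw [qMinor, dif_pos hβ]
  rfl

lemma qMinor_map {S : Type*} [CommRing S] (f : R →+* S)
    (B : Matrix m m R) (α β : Finset m) : qMinor (B.map f) α β = f (qMinor B α β) := by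
  unfold qMinor
  split_ifs with h
  · rw [show (Matrix.of fun i j : Fin α.card =>
        (B.map f) (α.orderEmbOfFin rfl i) (β.orderEmbOfFin h j)) =
        ((Matrix.of fun i j : Fin α.card =>
          B (α.orderEmbOfFin rfl i) (β.orderEmbOfFin h j)).map f) from rfl,
      ← RingHom.mapMatrix_apply, ← RingHom.map_det]
  · simp

lemma qMinor_symm {B : Matrix m m R} (hB : B.IsSymm) (α β : Finset m) :
    qMinor B α β = qMinor B β α := by
  by_cases h : β.card = α.card
  · rw [qMinor_eq_det B rfl h, qMinor_eq_det B h rfl, ← Matrix.det_transpose]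
    congr 1
    ext i j
    exact hB.apply _ _
  · rw [qMinor, dif_neg h, qMinor, dif_neg (fun hh => h hh.symm)]

end Aux

section Border

variable {R : Type*} [CommRing R] {m : ℕ}

@[simp] lemma borderMat_castSucc_castSucc (A : Matrix (Fin m) (Fin m) R) (x y : Fin m → R)
    (b : R) (i j : Fin m) : borderMat A x y b i.castSucc j.castSucc = A i j := by
  simp [borderMat, i.is_lt, j.is_lt]

@[simp] lemma borderMat_castSucc_last (A : Matrix (Fin m) (Fin m) R) (x y : Fin m → R)
    (b : R) (i : Fin m) : borderMat A x y b i.castSucc (Fin.last m) = x i := by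
  simp [borderMat, i.is_lt]

@[simp] lemma borderMat_last_castSucc (A : Matrix (Fin m) (Fin m) R) (x y : Fin m → R)
    (b : R) (j : Fin m) : borderMat A x y b (Fin.last m) j.castSucc = y j := by
  simp [borderMat, j.is_lt]

@[simp] lemma borderMat_last_last (A : Matrix (Fin m) (Fin m) R) (x y : Fin m → R)
    (b : R) : borderMat A x y b (Fin.last m) (Fin.last m) = b := by
  simp [borderMat]

lemma borderMat_map {S : Type*} [CommRing S] (f : R →+* S) (A : Matrix (Fin m) (Fin m) R)
    (x y : Fin m → R) (b : R) :
    (borderMat A x y b).map f = borderMat (A.map f) (f ∘ x) (f ∘ y) (f b) := by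
  ext i j
  simp only [borderMat, Matrix.map_apply, Matrix.of_apply]
  by_cases hi : (i : ℕ) < m <;> by_cases hj : (j : ℕ) < m <;>
    simp [hi, hj, Function.comp]

lemma borderMat_isSymm {A : Matrix (Fin m) (Fin m) R} (hA : A.IsSymm)
    (x : Fin m → R) (b : R) : (borderMat A x x b).IsSymm := by
  unfold Matrix.IsSymm
  ext i j
  simp only [Matrix.transpose_apply, borderMat, Matrix.of_apply]
  by_cases hi : (i : ℕ) < m <;> by_cases hj : (j : ℕ) < m <;>
    simp [hi, hj, hA.apply]

end Border

section FinsetFin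

variable {n : ℕ}

lemma last_not_mem_map (γ₀ : Finset (Fin n)) :
    Fin.last n ∉ γ₀.map Fin.castSuccEmb := by
  simp only [Finset.mem_map, Fin.castSuccEmb, Fin.castAddEmb]
  rintro ⟨j, -, hj⟩
  exact absurd hj (Fin.castSucc_lt_last j).ne

lemma decomp_not_last {γ : Finset (Fin (n + 1))} (h : Fin.last n ∉ γ) :
    ∃ γ₀ : Finset (Fin n), γ = γ₀.map Fin.castSuccEmb := by
  classical
  refine ⟨γ.preimage Fin.castSucc (Fin.castSucc_injective n).injOn, ?_⟩
  rw [Finset.map_eq_image]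
  have : ∀ x ∈ γ, x ∈ Set.range (Fin.castSucc : Fin n → Fin (n+1)) := by
    intro x hx
    obtain ⟨y, hy⟩ := Fin.exists_castSucc_eq.2 (fun hxl => h (hxl ▸ hx))
    exact ⟨y, hy⟩
  rw [show ((Fin.castSuccEmb : Fin n ↪ Fin (n+1)) : Fin n → Fin (n+1)) = Fin.castSucc from rfl]
  rw [Finset.image_preimage]
  exact (Finset.filter_true_of_mem this).symm

lemma decomp_mem_last {γ : Finset (Fin (n + 1))} (h : Fin.last n ∈ γ) :
    ∃ γ₀ : Finset (Fin n), γ = insert (Fin.last n) (γ₀.map Fin.castSuccEmb) := by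
  obtain ⟨γ₀, hγ₀⟩ := decomp_not_last (Finset.notMem_erase (Fin.last n) γ)
  exact ⟨γ₀, by rw [← hγ₀, Finset.insert_erase h]⟩

lemma orderEmbOfFin_map_castSucc {k : ℕ} (γ₀ : Finset (Fin n)) (hγ : γ₀.card = k)
    (h : (γ₀.map Fin.castSuccEmb).card = k) (i : Fin k) :
    (γ₀.map Fin.castSuccEmb).orderEmbOfFin h i = (γ₀.orderEmbOfFin hγ i).castSucc := by
  have := Finset.orderEmbOfFin_unique h
    (f := fun i : Fin k => (γ₀.orderEmbOfFin hγ i).castSucc)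
    (fun i => Finset.mem_map_of_mem _ (Finset.orderEmbOfFin_mem _ _ _))
    (fun a b hab => Fin.castSucc_lt_castSucc_iff.2
      ((γ₀.orderEmbOfFin hγ).strictMono hab))
  exact (congrFun this i).symm

/-- `orderEmbOfFin` of `insert last (γ₀.map castSucc)`, in `dite` form. -/
lemma orderEmbOfFin_insert_last {k : ℕ} (γ₀ : Finset (Fin n)) (hγ : γ₀.card = k)
    (h : (insert (Fin.last n) (γ₀.map Fin.castSuccEmb)).card = k + 1) (i : Fin (k + 1)) :
    (insert (Fin.last n) (γ₀.map Fin.castSuccEmb)).orderEmbOfFin h i =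
      if hi : (i : ℕ) < k then (γ₀.orderEmbOfFin hγ ⟨i, hi⟩).castSucc else Fin.last n := by
  have hmem : ∀ i : Fin (k+1), (if hi : (i : ℕ) < k then
      (γ₀.orderEmbOfFin hγ ⟨i, hi⟩).castSucc else Fin.last n) ∈
      insert (Fin.last n) (γ₀.map Fin.castSuccEmb) := by
    intro i
    by_cases hi : (i : ℕ) < k
    · rw [dif_pos hi]
      exact Finset.mem_insert_of_mem
        (Finset.mem_map_of_mem _ (Finset.orderEmbOfFin_mem _ _ _))
    · rw [dif_neg hi]; exact Finset.mem_insert_self _ _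
  have hmono : StrictMono (fun i : Fin (k+1) => if hi : (i : ℕ) < k then
      (γ₀.orderEmbOfFin hγ ⟨i, hi⟩).castSucc else Fin.last n) := by
    intro a b hab
    dsimp only
    by_cases ha : (a : ℕ) < k
    · by_cases hb : (b : ℕ) < k
      · rw [dif_pos ha, dif_pos hb]
        exact Fin.castSucc_lt_castSucc_iff.2
          ((γ₀.orderEmbOfFin hγ).strictMono (show (⟨a, ha⟩ : Fin k) < ⟨b, hb⟩ from hab))
      · rw [dif_pos ha, dif_neg hb]
        exact Fin.castSucc_lt_last _
    · exfalso
      have hbk : (b : ℕ) ≤ k := Nat.lt_succ_iff.1 b.is_lt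
      have : (a : ℕ) < (b : ℕ) := hab
      omega
  exact (congrFun (Finset.orderEmbOfFin_unique h hmem hmono) i).symm

/-- `orderEmbOfFin` of `insert s γ₀` composed with `succAbove` at the position of `s`. -/
lemma orderEmbOfFin_insert_succAbove {k : ℕ} {γ₀ : Finset (Fin n)} {s : Fin n}
    (hs : s ∉ γ₀) (hγ : γ₀.card = k) (h : (insert s γ₀).card = k + 1)
    {r : Fin (k + 1)} (hr : (insert s γ₀).orderEmbOfFin h r = s) (i : Fin k) :
    (insert s γ₀).orderEmbOfFin h (r.succAbove i) = γ₀.orderEmbOfFin hγ i := by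
  have hmem : ∀ i : Fin k, (insert s γ₀).orderEmbOfFin h (r.succAbove i) ∈ γ₀ := by
    intro i
    have h1 : (insert s γ₀).orderEmbOfFin h (r.succAbove i) ∈ insert s γ₀ :=
      Finset.orderEmbOfFin_mem _ _ _
    have h2 : (insert s γ₀).orderEmbOfFin h (r.succAbove i) ≠ s := by
      intro hc
      have := ((insert s γ₀).orderEmbOfFin h).injective (hc.trans hr.symm)
      exact (Fin.succAbove_ne r i) this
    exact (Finset.mem_insert.1 h1).resolve_left h2
  have hmono : StrictMono (fun i : Fin k =>
      (insert s γ₀).orderEmbOfFin h (r.succAbove i)) :=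
    fun a b hab => ((insert s γ₀).orderEmbOfFin h).strictMono
      ((Fin.strictMono_succAbove r) hab)
  exact congrFun (Finset.orderEmbOfFin_unique hγ hmem hmono) i

lemma exists_pos_of_mem {k : ℕ} {γ : Finset (Fin n)} (h : γ.card = k) {s : Fin n}
    (hs : s ∈ γ) : ∃ r : Fin k, γ.orderEmbOfFin h r = s := by
  have := Finset.range_orderEmbOfFin γ h
  have : s ∈ Set.range (γ.orderEmbOfFin h) := by rw [this]; exact_mod_cast hs
  exact this

end FinsetFin

section Kernel

variable {F : Type*} [Field F] {m : ℕ}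

lemma det_ne_zero_of_ker {k : ℕ} (M : Matrix (Fin k) (Fin k) F)
    (h : ∀ v : Fin k → F, M *ᵥ v = 0 → v = 0) : M.det ≠ 0 := by
  intro hdet
  obtain ⟨v, hv, hMv⟩ := Matrix.exists_mulVec_eq_zero_iff.2 hdet
  exact hv (h v hMv)

lemma exists_nonzero_ker_of_det_eq_zero {k : ℕ} (M : Matrix (Fin k) (Fin k) F)
    (h : M.det = 0) : ∃ v : Fin k → F, v ≠ 0 ∧ M *ᵥ v = 0 := by
  obtain ⟨v, hv, hMv⟩ := Matrix.exists_mulVec_eq_zero_iff.2 h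
  exact ⟨v, hv, hMv⟩

lemma ker_delete_row (Ahat : Matrix (Fin (m + 1)) (Fin (m + 1)) F) (hdet : Ahat.det ≠ 0)
    (r : Fin (m + 1)) :
    ∃ y₁ : Fin (m + 1) → F, y₁ ≠ 0 ∧ ∀ v : Fin (m + 1) → F,
      (∀ i : Fin m, (Ahat *ᵥ v) (r.succAbove i) = 0) → ∃ a : F, v = a • y₁ := by
  have hU : IsUnit Ahat.det := isUnit_iff_ne_zero.2 hdet
  refine ⟨Ahat⁻¹ *ᵥ Pi.single r 1, ?_, ?_⟩
  · intro h0
    have h1 : Ahat *ᵥ (Ahat⁻¹ *ᵥ Pi.single r 1) = Pi.single r 1 := by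
      rw [Matrix.mulVec_mulVec, Matrix.mul_nonsing_inv _ hU, Matrix.one_mulVec]
    rw [h0, Matrix.mulVec_zero] at h1
    have h2 := congrFun h1 r
    simp at h2
  · intro v hv
    refine ⟨(Ahat *ᵥ v) r, ?_⟩
    have key : Ahat *ᵥ v = ((Ahat *ᵥ v) r) • (Pi.single r (1:F) : Fin (m+1) → F) := by
      funext i
      by_cases hi : i = r
      · subst hi; simp
      · obtain ⟨i', hi'⟩ := Fin.exists_succAbove_eq hi
        rw [← hi', hv i', Pi.smul_apply, Pi.single_eq_of_ne (Fin.succAbove_ne r i'),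
          smul_zero]
    have hv2 : v = Ahat⁻¹ *ᵥ (Ahat *ᵥ v) := by
      rw [Matrix.mulVec_mulVec, Matrix.nonsing_inv_mul _ hU, Matrix.one_mulVec]
    conv_lhs => rw [hv2, key]
    rw [Matrix.mulVec_smul]

/-- spanning of the kernel of a submatrix obtained by deleting row `r` and column `c`
from an invertible matrix, given one nonzero kernel vector. -/
lemma ker_delete_rc_span (Ahat : Matrix (Fin (m + 1)) (Fin (m + 1)) F) (hdet : Ahat.det ≠ 0)
    (r c : Fin (m + 1)) (A : Matrix (Fin m) (Fin m) F)
    (hA : ∀ i j, A i j = Ahat (r.succAbove i) (c.succAbove j))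
    {y₀ : Fin m → F} (hy₀ : y₀ ≠ 0) (hk : A *ᵥ y₀ = 0) :
    ∀ y, A *ᵥ y = 0 → ∃ a : F, y = a • y₀ := by
  obtain ⟨y₁, hy₁ne, hy₁⟩ := ker_delete_row Ahat hdet r
  have key : ∀ y : Fin m → F, A *ᵥ y = 0 → ∃ a : F, c.insertNth 0 y = a • y₁ := by
    intro y hy
    apply hy₁
    intro i
    have : (Ahat *ᵥ c.insertNth 0 y) (r.succAbove i) =
        Ahat (r.succAbove i) c * 0 + ∑ j : Fin m, Ahat (r.succAbove i) (c.succAbove j) * y j := by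
      rw [Matrix.mulVec, dotProduct]
      rw [Fin.sum_univ_succAbove _ c]
      simp [Fin.insertNth_apply_same, Fin.insertNth_apply_succAbove]
    rw [this]
    simp only [mul_zero, zero_add]
    have : ∑ j : Fin m, Ahat (r.succAbove i) (c.succAbove j) * y j = (A *ᵥ y) i := by
      rw [Matrix.mulVec, dotProduct]
      exact Finset.sum_congr rfl fun j _ => by rw [hA]
    rw [this, hy]
    rfl
  obtain ⟨a₀, ha₀⟩ := key y₀ hk
  have ha₀ne : a₀ ≠ 0 := by
    intro h0
    apply hy₀
    funext i
    have := congrFun ha₀ (c.succAbove i)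
    rw [Fin.insertNth_apply_succAbove] at this
    rw [h0] at this
    simpa using this
  intro y hy
  obtain ⟨a, ha⟩ := key y hy
  refine ⟨a / a₀, ?_⟩
  funext i
  have h1 := congrFun ha (c.succAbove i)
  have h2 := congrFun ha₀ (c.succAbove i)
  rw [Fin.insertNth_apply_succAbove] at h1 h2
  simp only [Pi.smul_apply, smul_eq_mul] at h1 h2 ⊢
  rw [h1, h2]
  field_simp

end Kernel
section Dets

variable {F : Type*} [Field F] {m : ℕ}

lemma borderMat_mulVec_castSucc (A : Matrix (Fin m) (Fin m) F) (u w : Fin m → F) (b : F)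
    (v : Fin (m + 1) → F) (i : Fin m) :
    ((borderMat A u w b) *ᵥ v) i.castSucc =
      (A *ᵥ (v ∘ Fin.castSucc)) i + v (Fin.last m) * u i := by
  rw [Matrix.mulVec, dotProduct, Fin.sum_univ_castSucc]
  simp [Matrix.mulVec, dotProduct, mul_comm]

lemma borderMat_mulVec_last (A : Matrix (Fin m) (Fin m) F) (u w : Fin m → F) (b : F)
    (v : Fin (m + 1) → F) :
    ((borderMat A u w b) *ᵥ v) (Fin.last m) =
      w ⬝ᵥ (v ∘ Fin.castSucc) + b * v (Fin.last m) := by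
  rw [Matrix.mulVec, dotProduct, Fin.sum_univ_castSucc]
  simp [dotProduct]

/-- the easy case: `A` invertible, border with zeros and `b = 1`. -/
lemma det_borderMat_of_invertible (A : Matrix (Fin m) (Fin m) F)
    (hA : ∀ v : Fin m → F, A *ᵥ v = 0 → v = 0) :
    (borderMat A 0 0 1).det ≠ 0 := by
  apply det_ne_zero_of_ker
  intro v hv
  have hlast : v (Fin.last m) = 0 := by
    have := congrFun hv (Fin.last m)
    rw [borderMat_mulVec_last] at this
    simpa using this
  have hcs : v ∘ Fin.castSucc = 0 := by
    apply hA
    funext i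
    have := congrFun hv i.castSucc
    rw [borderMat_mulVec_castSucc] at this
    simpa using this
  funext i
  rcases Fin.lastCases (motive := fun i => v i = 0) hlast (fun j => congrFun hcs j) i with h
  exact h

/-- the singular case. -/
lemma det_borderMat_of_singular (A : Matrix (Fin m) (Fin m) F) (u w : Fin m → F) (b : F)
    {y₀ z₀ : Fin m → F} (hy₀ : y₀ ≠ 0)
    (hspan : ∀ y, A *ᵥ y = 0 → ∃ a : F, y = a • y₀)
    (hz₀ : z₀ ᵥ* A = 0) (hzu : z₀ ⬝ᵥ u ≠ 0) (hwy : w ⬝ᵥ y₀ ≠ 0) :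
    (borderMat A u w b).det ≠ 0 := by
  apply det_ne_zero_of_ker
  intro v hv
  set y := v ∘ Fin.castSucc with hy
  set t := v (Fin.last m) with ht
  have hrow : ∀ i : Fin m, (A *ᵥ y) i + t * u i = 0 := by
    intro i
    have := congrFun hv i.castSucc
    rw [borderMat_mulVec_castSucc] at this
    simpa using this
  have hdot : z₀ ⬝ᵥ (A *ᵥ y) + t * (z₀ ⬝ᵥ u) = 0 := by
    have h1 : z₀ ⬝ᵥ ((A *ᵥ y) + t • u) = 0 := by
      have h2 : (A *ᵥ y) + t • u = 0 := funext fun i => hrow i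
      rw [h2, dotProduct_zero]
    rw [dotProduct_add, dotProduct_smul, smul_eq_mul] at h1
    exact h1
  rw [Matrix.dotProduct_mulVec, hz₀] at hdot
  simp only [zero_dotProduct, zero_add] at hdot
  have htz : t = 0 := by
    rcases mul_eq_zero.1 hdot with h | h
    · exact h
    · exact absurd h hzu
  have hAy : A *ᵥ y = 0 := by
    funext i
    have := hrow i
    rw [htz, zero_mul, add_zero] at this
    exact this
  obtain ⟨a, ha⟩ := hspan y hAy
  have hlastrow : w ⬝ᵥ y + b * t = 0 := by
    have := congrFun hv (Fin.last m)
    rw [borderMat_mulVec_last] at this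
    simpa using this
  rw [htz, mul_zero, add_zero, ha, dotProduct_smul] at hlastrow
  have ha0 : a = 0 := by
    rcases mul_eq_zero.1 hlastrow with h | h
    · exact h
    · exact absurd h hwy
  funext i
  refine Fin.lastCases ?_ ?_ i
  · exact htz
  · intro j
    show y j = 0
    rw [congrFun ha j, ha0, zero_smul]
    rfl

/-- determinant of the "row-bordered" matrix. -/
lemma det_rowBorder (C : Matrix (Fin m) (Fin (m + 1)) F) (xr : Fin (m + 1) → F)
    {y₁ : Fin (m + 1) → F}
    (hspan : ∀ v, C *ᵥ v = 0 → ∃ a : F, v = a • y₁)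
    (hx : xr ⬝ᵥ y₁ ≠ 0) :
    (Matrix.of (Fin.snoc (fun i => C i) xr) : Matrix (Fin (m+1)) (Fin (m+1)) F).det ≠ 0 := by
  apply det_ne_zero_of_ker
  intro v hv
  have hC : C *ᵥ v = 0 := by
    funext i
    have := congrFun hv i.castSucc
    simpa [Matrix.mulVec, dotProduct, Fin.snoc_castSucc] using this
  obtain ⟨a, ha⟩ := hspan v hC
  have hlast := congrFun hv (Fin.last m)
  simp only [Matrix.mulVec, dotProduct] at hlast
  have hlast' : xr ⬝ᵥ v = 0 := by
    simpa [dotProduct, Fin.snoc_last] using hlast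
  rw [ha, dotProduct_smul] at hlast'
  have ha0 : a = 0 := by
    rcases mul_eq_zero.1 hlast' with h | h
    · exact h
    · exact absurd h hx
  rw [ha, ha0, zero_smul]

lemma exists_common_nonvanishing {ι : Type*} [Fintype ι]
    (f g : (ι → F) → F)
    (hf : ∀ a b, f (a + b) = f a + f b) (hg : ∀ a b, g (a + b) = g a + g b)
    {a b : ι → F} (hfa : f a ≠ 0) (hgb : g b ≠ 0) :
    ∃ x : ι → F, f x ≠ 0 ∧ g x ≠ 0 := by
  by_cases hga : g a ≠ 0
  · exact ⟨a, hfa, hga⟩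
  by_cases hfb : f b ≠ 0
  · exact ⟨b, hfb, hgb⟩
  push_neg at hga hfb
  exact ⟨a + b, by rw [hf, hfb, add_zero]; exact hfa, by rw [hg, hga, zero_add]; exact hgb⟩

end Dets
section Structure

variable {F : Type*} [Field F] {n : ℕ}

/-- Submatrix of a bordered matrix on index sets both containing `last`. -/
lemma submatrix_border_both (B : Matrix (Fin n) (Fin n) F) (x : Fin n → F) (b : F)
    {m : ℕ} (α₀ β₀ : Finset (Fin n)) (hα₀ : α₀.card = m) (hβ₀ : β₀.card = m)
    (hα : (insert (Fin.last n) (α₀.map Fin.castSuccEmb)).card = m + 1)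
    (hβ : (insert (Fin.last n) (β₀.map Fin.castSuccEmb)).card = m + 1) :
    (borderMat B x x b).submatrix
        ((insert (Fin.last n) (α₀.map Fin.castSuccEmb)).orderEmbOfFin hα)
        ((insert (Fin.last n) (β₀.map Fin.castSuccEmb)).orderEmbOfFin hβ) =
      borderMat (B.submatrix (α₀.orderEmbOfFin hα₀) (β₀.orderEmbOfFin hβ₀))
        (x ∘ α₀.orderEmbOfFin hα₀) (x ∘ β₀.orderEmbOfFin hβ₀) b := by
  ext i j
  rw [Matrix.submatrix_apply, orderEmbOfFin_insert_last α₀ hα₀ hα i,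
    orderEmbOfFin_insert_last β₀ hβ₀ hβ j]
  have him : (i : ℕ) < m + 1 := i.is_lt
  have hjm : (j : ℕ) < m + 1 := j.is_lt
  by_cases hi : (i : ℕ) < m <;> by_cases hj : (j : ℕ) < m <;>
    simp [borderMat, hi, hj, Fin.is_lt, Nat.lt_irrefl]

/-- Submatrix of a bordered matrix: rows contain `last`, columns do not. -/
lemma submatrix_border_row (B : Matrix (Fin n) (Fin n) F) (x : Fin n → F) (b : F)
    {m : ℕ} (γ β₀ : Finset (Fin n)) (hγ : γ.card = m) (hβ₀ : β₀.card = m + 1)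
    (hα : (insert (Fin.last n) (γ.map Fin.castSuccEmb)).card = m + 1)
    (hβ : (β₀.map Fin.castSuccEmb).card = m + 1) :
    (borderMat B x x b).submatrix
        ((insert (Fin.last n) (γ.map Fin.castSuccEmb)).orderEmbOfFin hα)
        ((β₀.map Fin.castSuccEmb).orderEmbOfFin hβ) =
      Matrix.of (Fin.snoc
        (fun i => (B.submatrix (γ.orderEmbOfFin hγ) (β₀.orderEmbOfFin hβ₀)) i)
        (x ∘ β₀.orderEmbOfFin hβ₀)) := by
  ext i j
  rw [Matrix.submatrix_apply, orderEmbOfFin_insert_last γ hγ hα i,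
    orderEmbOfFin_map_castSucc β₀ hβ₀ hβ j]
  refine Fin.lastCases ?_ ?_ i
  · rw [dif_neg (by simp : ¬ ((Fin.last m : ℕ) < m)), Matrix.of_apply, Fin.snoc_last,
      borderMat_last_castSucc]
    rfl
  · intro i'
    rw [dif_pos (by simpa using i'.is_lt : ((Fin.castSucc i' : ℕ) < m)), Matrix.of_apply,
      Fin.snoc_castSucc, borderMat_castSucc_castSucc]
    rw [show (⟨(Fin.castSucc i' : ℕ), _⟩ : Fin m) = i' from Fin.ext rfl]
    rfl

/-- minors of a bordered symmetric matrix avoiding the last row/column are minors of `B`. -/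
lemma qMinor_border_embed (B : Matrix (Fin n) (Fin n) F) (x : Fin n → F) (b : F)
    (α₀ β₀ : Finset (Fin n)) :
    qMinor (borderMat B x x b) (α₀.map Fin.castSuccEmb) (β₀.map Fin.castSuccEmb) =
      qMinor B α₀ β₀ := by
  by_cases h : β₀.card = α₀.card
  · rw [qMinor_eq_det (borderMat B x x b)
      (show (α₀.map Fin.castSuccEmb).card = α₀.card from Finset.card_map _)
      (show (β₀.map Fin.castSuccEmb).card = α₀.card from (Finset.card_map _).trans h),
      qMinor_eq_det B rfl h]
    congr 1
    ext i j
    rw [Matrix.submatrix_apply, Matrix.submatrix_apply,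
      orderEmbOfFin_map_castSucc α₀ rfl _ i, orderEmbOfFin_map_castSucc β₀ h _ j,
      borderMat_castSucc_castSucc]
  · rw [qMinor, dif_neg (by simpa using h), qMinor, dif_neg h]

end Structure
lemma qpNonzero_self {R : Type*} [CommRing R] {A : Type*} [Fintype A] [LinearOrder A]
    {B : Matrix A A R} {k : ℕ} (h : QPAllNonzero B k) {s : Finset A}
    (hs : s.card = k) : qMinor B s s ≠ 0 :=
  h s s ⟨hs, hs, by rw [Finset.inter_self]; omega⟩

lemma orderEmbOfFin_congr {A : Type*} [LinearOrder A] {s t : Finset A} (h : s = t)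
    {k : ℕ} (hs : s.card = k) (ht : t.card = k) (x : Fin k) :
    s.orderEmbOfFin hs x = t.orderEmbOfFin ht x := by
  subst h; rfl

section Witness

variable {F : Type*} [Field F] {n : ℕ}

lemma trivial_ker_of_det_ne_zero {k : ℕ} {M : Matrix (Fin k) (Fin k) F}
    (h : M.det ≠ 0) : ∀ v : Fin k → F, M *ᵥ v = 0 → v = 0 := by
  intro v hv
  by_contra hne
  exact h (Matrix.exists_mulVec_eq_zero_iff.1 ⟨v, hne, hv⟩)

/-- Witness for pairs whose row set contains `last` but column set does not. -/
lemma witness_row (B : Matrix (Fin n) (Fin n) F) {k : ℕ}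
    (hall : QPAllNonzero B k)
    {α β : Finset (Fin (n + 1))} (hqp : IsQPPair k α β)
    (hlα : Fin.last n ∈ α) (hlβ : Fin.last n ∉ β) :
    ∃ (x : Fin n → F) (b : F), qMinor (borderMat B x x b) α β ≠ 0 := by
  obtain ⟨γ, rfl⟩ := decomp_mem_last hlα
  obtain ⟨β₀, rfl⟩ := decomp_not_last hlβ
  obtain ⟨hcα, hcβ, hcint⟩ := hqp
  set m := γ.card with hm
  have hk : k = m + 1 := by
    rw [← hcα, Finset.card_insert_of_notMem (last_not_mem_map γ), Finset.card_map]
  subst hk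
  have hβ₀c : β₀.card = m + 1 := by rw [← hcβ, Finset.card_map]
  -- γ ⊆ β₀
  have hint : m ≤ (γ ∩ β₀).card := by
    have h1 : insert (Fin.last n) (γ.map Fin.castSuccEmb) ∩ β₀.map Fin.castSuccEmb
        = (γ ∩ β₀).map Fin.castSuccEmb := by
      ext u
      simp only [Finset.mem_inter, Finset.mem_insert, Finset.mem_map,
        Fin.coe_castSuccEmb]
      constructor
      · rintro ⟨h1, a, ha, rfl⟩
        rcases h1 with h | ⟨a', ha', haa⟩
        · exact absurd h (Fin.castSucc_lt_last a).ne
        · have haa' : a' = a := Fin.castSucc_injective n haa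
          exact ⟨a, ⟨haa' ▸ ha', ha⟩, rfl⟩
      · rintro ⟨a, ⟨ha1, ha2⟩, rfl⟩
        exact ⟨Or.inr ⟨a, ha1, rfl⟩, a, ha2, rfl⟩
    rw [h1, Finset.card_map] at hcint
    simpa using hcint
  have hsub : γ ⊆ β₀ := by
    have h2 : γ ∩ β₀ = γ :=
      Finset.eq_of_subset_of_card_le Finset.inter_subset_left (by omega)
    exact Finset.inter_eq_left.1 h2
  obtain ⟨t, htβ, htγ⟩ : ∃ t ∈ β₀, t ∉ γ := by
    refine Finset.exists_of_ssubset (Finset.ssubset_iff_subset_ne.2 ⟨hsub, ?_⟩)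
    intro h
    rw [h] at hm
    omega
  have hβ₀ins : β₀ = insert t γ := by
    refine (Finset.eq_of_subset_of_card_le (Finset.insert_subset htβ hsub) ?_).symm
    rw [Finset.card_insert_of_notMem htγ, hβ₀c]
  -- the invertible extension
  set Ahat := B.submatrix (β₀.orderEmbOfFin hβ₀c) (β₀.orderEmbOfFin hβ₀c) with hAhat
  have hdet : Ahat.det ≠ 0 := by
    rw [← qMinor_eq_det B hβ₀c hβ₀c]
    exact qpNonzero_self hall hβ₀c
  obtain ⟨r, hr⟩ := exists_pos_of_mem hβ₀c htβ
  have hE3 : ∀ i : Fin m, β₀.orderEmbOfFin hβ₀c (r.succAbove i) = γ.orderEmbOfFin rfl i := by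
    intro i
    rw [orderEmbOfFin_congr hβ₀ins hβ₀c (hβ₀ins ▸ hβ₀c) (r.succAbove i),
      orderEmbOfFin_insert_succAbove htγ rfl (hβ₀ins ▸ hβ₀c)
        (by rw [← orderEmbOfFin_congr hβ₀ins hβ₀c (hβ₀ins ▸ hβ₀c) r]; exact hr) i]
  obtain ⟨y₁, hy₁ne, hy₁⟩ := ker_delete_row Ahat hdet r
  set C := B.submatrix (γ.orderEmbOfFin (rfl : γ.card = m)) (β₀.orderEmbOfFin hβ₀c) with hC
  have hspan : ∀ v : Fin (m + 1) → F, C *ᵥ v = 0 → ∃ a : F, v = a • y₁ := by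
    intro v hv
    apply hy₁
    intro i
    have hrows : ∀ j, Ahat (r.succAbove i) j = C i j := by
      intro j
      rw [hAhat, hC, Matrix.submatrix_apply, Matrix.submatrix_apply, hE3 i]
    have : (Ahat *ᵥ v) (r.succAbove i) = (C *ᵥ v) i := by
      rw [Matrix.mulVec, Matrix.mulVec, dotProduct, dotProduct]
      exact Finset.sum_congr rfl fun j _ => by rw [hrows j]
    rw [this, hv]
    rfl
  obtain ⟨q₀, hq₀⟩ := Function.ne_iff.1 hy₁ne
  refine ⟨Pi.single (β₀.orderEmbOfFin hβ₀c q₀) 1, 0, ?_⟩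
  set x : Fin n → F := Pi.single (β₀.orderEmbOfFin hβ₀c q₀) 1 with hx
  have hxcomp : x ∘ β₀.orderEmbOfFin hβ₀c = Pi.single q₀ 1 := by
    funext q
    simp only [Function.comp_apply, hx, Pi.single_apply]
    by_cases h : q = q₀
    · subst h; simp
    · rw [if_neg (fun hc => h ((β₀.orderEmbOfFin hβ₀c).injective hc)), if_neg h]
  rw [qMinor_eq_det (borderMat B x x 0) hcα hcβ,
    submatrix_border_row B x 0 γ β₀ rfl hβ₀c hcα hcβ]
  apply det_rowBorder _ _ hspan
  rw [hxcomp, single_dotProduct, one_mul]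
  exact fun h => hq₀ (by simpa using h)

end Witness
section Witness2

variable {F : Type*} [Field F] {n : ℕ}

lemma single_comp_orderEmb {N k : ℕ} (s : Finset (Fin N)) (hs : s.card = k) (q₀ : Fin k) :
    (Pi.single (s.orderEmbOfFin hs q₀) (1 : F)) ∘ s.orderEmbOfFin hs = Pi.single q₀ 1 := by
  funext q
  simp only [Function.comp_apply, Pi.single_apply]
  by_cases h : q = q₀
  · subst h; simp
  · rw [if_neg (fun hc => h ((s.orderEmbOfFin hs).injective hc)), if_neg h]

/-- Witness for pairs both of whose index sets contain `last`. -/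
lemma witness_both (B : Matrix (Fin n) (Fin n) F) {k : ℕ}
    (hall : QPAllNonzero B k) (hkn : k ≤ n)
    {α β : Finset (Fin (n + 1))} (hqp : IsQPPair k α β)
    (hlα : Fin.last n ∈ α) (hlβ : Fin.last n ∈ β) :
    ∃ (x : Fin n → F) (b : F), qMinor (borderMat B x x b) α β ≠ 0 := by
  obtain ⟨α₀, rfl⟩ := decomp_mem_last hlα
  obtain ⟨β₀, rfl⟩ := decomp_mem_last hlβ
  obtain ⟨hcα, hcβ, hcint⟩ := hqp
  set m := α₀.card with hm
  have hk : k = m + 1 := by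
    rw [← hcα, Finset.card_insert_of_notMem (last_not_mem_map α₀), Finset.card_map]
  subst hk
  have hβ₀c : β₀.card = m := by
    have h := hcβ
    rw [Finset.card_insert_of_notMem (last_not_mem_map β₀), Finset.card_map] at h
    omega
  set A := B.submatrix (α₀.orderEmbOfFin (rfl : α₀.card = m)) (β₀.orderEmbOfFin hβ₀c)
    with hA
  have hstruct : ∀ (x : Fin n → F) (b : F),
      qMinor (borderMat B x x b) (insert (Fin.last n) (α₀.map Fin.castSuccEmb))
        (insert (Fin.last n) (β₀.map Fin.castSuccEmb)) =
      (borderMat A (x ∘ α₀.orderEmbOfFin (rfl : α₀.card = m))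
        (x ∘ β₀.orderEmbOfFin hβ₀c) b).det := by
    intro x b
    rw [qMinor_eq_det _ hcα hcβ, submatrix_border_both B x b α₀ β₀ rfl hβ₀c hcα hcβ]
  by_cases hdetA : A.det = 0
  · -- singular case: build the invertible extension
    have hint : m - 1 ≤ (α₀ ∩ β₀).card := by
      have hsub2 : (insert (Fin.last n) (α₀.map Fin.castSuccEmb) ∩
          insert (Fin.last n) (β₀.map Fin.castSuccEmb)) ⊆
          insert (Fin.last n) ((α₀ ∩ β₀).map Fin.castSuccEmb) := by
        intro u hu
        have h1 := Finset.mem_inter.1 hu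
        rcases Finset.mem_insert.1 h1.1 with h | h
        · exact Finset.mem_insert.2 (Or.inl h)
        · obtain ⟨a, ha, rfl⟩ := Finset.mem_map.1 h
          rcases Finset.mem_insert.1 h1.2 with h' | h'
          · exact absurd h' (Fin.castSucc_lt_last a).ne
          · obtain ⟨a', ha', haa⟩ := Finset.mem_map.1 h'
            have haa' : a' = a := Fin.castSucc_injective n haa
            exact Finset.mem_insert.2 (Or.inr (Finset.mem_map.2
              ⟨a, Finset.mem_inter.2 ⟨ha, haa' ▸ ha'⟩, rfl⟩))
      have hc2 := Finset.card_le_card hsub2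
      have hc3 : (insert (Fin.last n) ((α₀ ∩ β₀).map Fin.castSuccEmb)).card =
          (α₀ ∩ β₀).card + 1 := by
        rw [Finset.card_insert_of_notMem (last_not_mem_map _), Finset.card_map]
      omega
    obtain ⟨δ, hδc, r, c, hrc⟩ : ∃ (δ : Finset (Fin n)) (hδc : δ.card = m + 1)
        (r c : Fin (m + 1)), ∀ i j, A i j =
          (B.submatrix (δ.orderEmbOfFin hδc) (δ.orderEmbOfFin hδc))
            (r.succAbove i) (c.succAbove j) := by
      rcases eq_or_ne α₀ β₀ with hab | hab
      · obtain ⟨s, hs⟩ : ∃ s, s ∉ α₀ := by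
          by_contra hcon
          push_neg at hcon
          have huniv : α₀ = Finset.univ := Finset.eq_univ_iff_forall.2 hcon
          rw [huniv, Finset.card_univ, Fintype.card_fin] at hm
          omega
        have hδc2 : (insert s α₀).card = m + 1 := by
          rw [Finset.card_insert_of_notMem hs]
        obtain ⟨r, hr⟩ := exists_pos_of_mem hδc2 (Finset.mem_insert_self s α₀)
        have hrows : ∀ i : Fin m,
            (insert s α₀).orderEmbOfFin hδc2 (r.succAbove i) = α₀.orderEmbOfFin rfl i :=
          fun i => orderEmbOfFin_insert_succAbove hs rfl hδc2 hr i
        have hcols : ∀ j : Fin m, (insert s α₀).orderEmbOfFin hδc2 (r.succAbove j) =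
            β₀.orderEmbOfFin hβ₀c j := by
          intro j
          rw [hrows j]
          exact orderEmbOfFin_congr hab rfl hβ₀c j
        refine ⟨insert s α₀, hδc2, r, r, ?_⟩
        intro i j
        rw [hA, Matrix.submatrix_apply, Matrix.submatrix_apply, hrows i, hcols j]
      · -- almost principal
        have hm1 : 1 ≤ m := by
          rcases Nat.eq_zero_or_pos m with h0 | h1
          · exfalso
            apply hab
            have he1 : α₀ = ∅ := Finset.card_eq_zero.1 (by omega)
            have he2 : β₀ = ∅ := Finset.card_eq_zero.1 (by omega)
            rw [he1, he2]
          · exact h1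
        obtain ⟨aa, haaα, haaβ⟩ : ∃ aa ∈ α₀, aa ∉ β₀ := by
          by_contra hcon
          push_neg at hcon
          exact hab (Finset.eq_of_subset_of_card_le hcon (by omega))
        obtain ⟨cc, hccβ, hccα⟩ : ∃ cc ∈ β₀, cc ∉ α₀ := by
          by_contra hcon
          push_neg at hcon
          exact hab (Finset.eq_of_subset_of_card_le hcon (by omega)).symm
        have herase1 : α₀ ∩ β₀ = β₀.erase cc := by
          apply Finset.eq_of_subset_of_card_le
          · intro u hu
            have h2 := Finset.mem_inter.1 hu
            exact Finset.mem_erase.2 ⟨fun hc => hccα (hc ▸ h2.1), h2.2⟩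
          · rw [Finset.card_erase_of_mem hccβ, hβ₀c]
            exact hint
        have herase2 : α₀ ∩ β₀ = α₀.erase aa := by
          apply Finset.eq_of_subset_of_card_le
          · intro u hu
            have h2 := Finset.mem_inter.1 hu
            exact Finset.mem_erase.2 ⟨fun hc => haaβ (hc ▸ h2.2), h2.1⟩
          · rw [Finset.card_erase_of_mem haaα, ← hm]
            exact hint
        have hδc2 : (insert cc α₀).card = m + 1 := by
          rw [Finset.card_insert_of_notMem hccα]
        have hδeq : insert cc α₀ = insert aa β₀ := by
          apply Finset.Subset.antisymm
          · intro u hu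
            rcases Finset.mem_insert.1 hu with h | h
            · exact Finset.mem_insert_of_mem (h ▸ hccβ)
            · by_cases h2 : u = aa
              · exact h2 ▸ Finset.mem_insert_self _ _
              · have h3 : u ∈ α₀.erase aa := Finset.mem_erase.2 ⟨h2, h⟩
                rw [← herase2] at h3
                exact Finset.mem_insert_of_mem (Finset.mem_inter.1 h3).2
          · intro u hu
            rcases Finset.mem_insert.1 hu with h | h
            · exact Finset.mem_insert_of_mem (h ▸ haaα)
            · by_cases h2 : u = cc
              · exact h2 ▸ Finset.mem_insert_self _ _
              · have h3 : u ∈ β₀.erase cc := Finset.mem_erase.2 ⟨h2, h⟩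
                rw [← herase1] at h3
                exact Finset.mem_insert_of_mem (Finset.mem_inter.1 h3).1
        obtain ⟨r, hr⟩ := exists_pos_of_mem hδc2 (Finset.mem_insert_self cc α₀)
        obtain ⟨c, hc⟩ := exists_pos_of_mem hδc2 (Finset.mem_insert_of_mem haaα)
        have hrows : ∀ i : Fin m,
            (insert cc α₀).orderEmbOfFin hδc2 (r.succAbove i) = α₀.orderEmbOfFin rfl i :=
          fun i => orderEmbOfFin_insert_succAbove hccα rfl hδc2 hr i
        have h1 : (insert aa β₀).card = m + 1 := by
          rw [Finset.card_insert_of_notMem haaβ, hβ₀c]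
        have hcols : ∀ j : Fin m, (insert cc α₀).orderEmbOfFin hδc2 (c.succAbove j) =
            β₀.orderEmbOfFin hβ₀c j := by
          intro j
          rw [orderEmbOfFin_congr hδeq hδc2 h1 (c.succAbove j)]
          apply orderEmbOfFin_insert_succAbove haaβ hβ₀c h1
          rw [← orderEmbOfFin_congr hδeq hδc2 h1 c]
          exact hc
        refine ⟨insert cc α₀, hδc2, r, c, ?_⟩
        intro i j
        rw [hA, Matrix.submatrix_apply, Matrix.submatrix_apply, hrows i, hcols j]
    set Ahat := B.submatrix (δ.orderEmbOfFin hδc) (δ.orderEmbOfFin hδc) with hAhat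
    have hdet : Ahat.det ≠ 0 := by
      rw [← qMinor_eq_det B hδc hδc]
      exact qpNonzero_self hall hδc
    obtain ⟨y₀, hy₀ne, hy₀k⟩ := exists_nonzero_ker_of_det_eq_zero A hdetA
    have hspan := ker_delete_rc_span Ahat hdet r c A hrc hy₀ne hy₀k
    have hdetAT : Aᵀ.det = 0 := by rw [Matrix.det_transpose]; exact hdetA
    obtain ⟨z₀, hz₀ne, hz₀k⟩ := exists_nonzero_ker_of_det_eq_zero Aᵀ hdetAT
    have hz₀ : z₀ ᵥ* A = 0 := by rw [← Matrix.mulVec_transpose]; exact hz₀k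
    obtain ⟨p₀, hp₀⟩ := Function.ne_iff.1 hz₀ne
    obtain ⟨q₀, hq₀⟩ := Function.ne_iff.1 hy₀ne
    obtain ⟨x, hxf, hxg⟩ := exists_common_nonvanishing
      (fun x : Fin n → F => z₀ ⬝ᵥ (x ∘ α₀.orderEmbOfFin (rfl : α₀.card = m)))
      (fun x : Fin n → F => (x ∘ β₀.orderEmbOfFin hβ₀c) ⬝ᵥ y₀)
      (fun a b => by
        have h0 : z₀ ⬝ᵥ ((a + b) ∘ α₀.orderEmbOfFin (rfl : α₀.card = m)) =
            z₀ ⬝ᵥ (a ∘ α₀.orderEmbOfFin (rfl : α₀.card = m)) +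
            z₀ ⬝ᵥ (b ∘ α₀.orderEmbOfFin (rfl : α₀.card = m)) := by
          rw [← dotProduct_add]; rfl
        exact h0)
      (fun a b => by
        have h0 : ((a + b) ∘ β₀.orderEmbOfFin hβ₀c) ⬝ᵥ y₀ =
            (a ∘ β₀.orderEmbOfFin hβ₀c) ⬝ᵥ y₀ + (b ∘ β₀.orderEmbOfFin hβ₀c) ⬝ᵥ y₀ := by
          rw [← add_dotProduct]; rfl
        exact h0)
      (a := Pi.single (α₀.orderEmbOfFin (rfl : α₀.card = m) p₀) 1)
      (b := Pi.single (β₀.orderEmbOfFin hβ₀c q₀) 1)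
      (by
        rw [single_comp_orderEmb α₀ (rfl : α₀.card = m) p₀, dotProduct_single,
          mul_one]
        exact fun h => hp₀ (by simpa using h))
      (by
        rw [single_comp_orderEmb β₀ hβ₀c q₀, single_dotProduct, one_mul]
        exact fun h => hq₀ (by simpa using h))
    refine ⟨x, 0, ?_⟩
    rw [hstruct x 0]
    exact det_borderMat_of_singular A _ _ 0 hy₀ne hspan hz₀ hxf hxg
  · -- A invertible
    refine ⟨0, 1, ?_⟩
    rw [hstruct 0 1]
    have h1 : ((0 : Fin n → F) ∘ α₀.orderEmbOfFin (rfl : α₀.card = m)) = 0 := rfl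
    have h2 : ((0 : Fin n → F) ∘ β₀.orderEmbOfFin hβ₀c) = 0 := rfl
    rw [h1, h2]
    exact det_borderMat_of_invertible A (trivial_ker_of_det_ne_zero hdetA)

/-- Witness for the full pair (`univ`, `univ`). -/
lemma witness_univ (B : Matrix (Fin n) (Fin n) F) (hall : QPAllNonzero B n) :
    ∃ (x : Fin n → F) (b : F),
      qMinor (borderMat B x x b) (Finset.univ : Finset (Fin (n + 1))) Finset.univ ≠ 0 := by
  have huc : (Finset.univ : Finset (Fin n)).card = n := by
    rw [Finset.card_univ, Fintype.card_fin]
  have huniv : (Finset.univ : Finset (Fin (n + 1))) =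
      insert (Fin.last n) ((Finset.univ : Finset (Fin n)).map Fin.castSuccEmb) := by
    apply Finset.Subset.antisymm
    · intro u _
      refine Fin.lastCases ?_ (fun i => ?_) u
      · exact Finset.mem_insert_self _ _
      · exact Finset.mem_insert_of_mem (Finset.mem_map_of_mem _ (Finset.mem_univ i))
    · exact Finset.subset_univ _
  have hc2 : (insert (Fin.last n) ((Finset.univ : Finset (Fin n)).map Fin.castSuccEmb)).card
      = n + 1 := by
    rw [← huniv, Finset.card_univ, Fintype.card_fin]
  refine ⟨0, 1, ?_⟩
  rw [huniv, qMinor_eq_det _ hc2 hc2,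
    submatrix_border_both B 0 1 Finset.univ Finset.univ huc huc hc2 hc2]
  have h1 : ((0 : Fin n → F) ∘ Finset.univ.orderEmbOfFin huc) = 0 := rfl
  rw [h1]
  apply det_borderMat_of_invertible
  apply trivial_ker_of_det_ne_zero
  rw [← qMinor_eq_det B huc huc]
  exact qpNonzero_self hall huc

end Witness2
section Poly

variable {F : Type*} [Field F] [CharZero F] {n : ℕ}

noncomputable def polyBorder (B : Matrix (Fin n) (Fin n) F) :
    Matrix (Fin (n + 1)) (Fin (n + 1)) (MvPolynomial (Fin (n + 1)) F) :=
  borderMat (B.map MvPolynomial.C) (fun i => MvPolynomial.X i.castSucc)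
    (fun i => MvPolynomial.X i.castSucc) (MvPolynomial.X (Fin.last n))

lemma polyBorder_eval (B : Matrix (Fin n) (Fin n) F) (v : Fin (n + 1) → F) :
    (polyBorder B).map (MvPolynomial.eval v) =
      borderMat B (v ∘ Fin.castSucc) (v ∘ Fin.castSucc) (v (Fin.last n)) := by
  rw [polyBorder, borderMat_map (MvPolynomial.eval v)]
  have h1 : (B.map (MvPolynomial.C : F →+* MvPolynomial (Fin (n+1)) F)).map
      (MvPolynomial.eval v) = B := by
    ext i j
    simp [Matrix.map_apply]
  have h2 : (MvPolynomial.eval v : MvPolynomial (Fin (n+1)) F →+* F) ∘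
      (fun i : Fin n => (MvPolynomial.X i.castSucc : MvPolynomial (Fin (n+1)) F)) =
      v ∘ Fin.castSucc := by
    funext i
    simp
  have h3 : MvPolynomial.eval v (MvPolynomial.X (Fin.last n)) = v (Fin.last n) := by simp
  rw [h1, h2, h3]

lemma exists_good_vector (B : Matrix (Fin n) (Fin n) F) :
    ∃ (x : Fin n → F) (b : F), ∀ α β : Finset (Fin (n + 1)),
      (∃ (x' : Fin n → F) (b' : F), qMinor (borderMat B x' x' b') α β ≠ 0) →
      qMinor (borderMat B x x b) α β ≠ 0 := by
  classical
  set P : Finset (Fin (n + 1)) × Finset (Fin (n + 1)) → MvPolynomial (Fin (n + 1)) F :=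
    fun p => qMinor (polyBorder B) p.1 p.2 with hP
  have heval : ∀ (v : Fin (n + 1) → F) p, MvPolynomial.eval v (P p) =
      qMinor (borderMat B (v ∘ Fin.castSucc) (v ∘ Fin.castSucc) (v (Fin.last n)))
        p.1 p.2 := by
    intro v p
    rw [hP, ← polyBorder_eval B v, qMinor_map]
  set Good : Finset (Finset (Fin (n + 1)) × Finset (Fin (n + 1))) :=
    Finset.univ.filter
      (fun p => ∃ x' b', qMinor (borderMat B x' x' b') p.1 p.2 ≠ 0) with hGood
  have hPne : ∀ p ∈ Good, P p ≠ 0 := by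
    intro p hp
    obtain ⟨x', b', hx'⟩ := (Finset.mem_filter.1 hp).2
    intro h0
    apply hx'
    have h := heval (Fin.snoc x' b') p
    rw [h0, map_zero] at h
    rw [show (Fin.snoc x' b' : Fin (n + 1) → F) ∘ Fin.castSucc = x' from
        funext (fun i => by simp [Function.comp]),
      show (Fin.snoc x' b' : Fin (n + 1) → F) (Fin.last n) = b' from by simp] at h
    exact h.symm
  have hprod : (Good.prod P) ≠ 0 := Finset.prod_ne_zero_iff.2 hPne
  have hex : ∃ v : Fin (n + 1) → F, MvPolynomial.eval v (Good.prod P) ≠ 0 := by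
    by_contra hcon
    push_neg at hcon
    exact hprod (MvPolynomial.funext (q := 0) (fun v => by rw [hcon v, map_zero]))
  obtain ⟨v, hv⟩ := hex
  refine ⟨v ∘ Fin.castSucc, v (Fin.last n), ?_⟩
  intro α β hw
  have hmem : (α, β) ∈ Good := Finset.mem_filter.2 ⟨Finset.mem_univ _, hw⟩
  have hne : MvPolynomial.eval v (P (α, β)) ≠ 0 := by
    intro h0
    apply hv
    rw [map_prod]
    exact Finset.prod_eq_zero hmem h0
  rw [heval v (α, β)] at hne
  exact hne

end Poly

section Entry

variable {R : Type*} [CommRing R] {A : Type*} [Fintype A] [LinearOrder A]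

lemma qprEntry_eq_A_iff {B : Matrix A A R} {k : ℕ} :
    qprEntry B k = QPR.A ↔ QPAllNonzero B k := by
  unfold qprEntry
  by_cases h1 : QPAllNonzero B k
  · simp [h1]
  · rw [if_neg h1]
    constructor
    · intro h
      split_ifs at h
      all_goals exact absurd h (by decide)
    · intro h
      exact absurd h h1

lemma qprEntry_eq_S_iff {B : Matrix A A R} {k : ℕ} :
    qprEntry B k = QPR.S ↔ ¬QPAllNonzero B k ∧ ¬QPAllZero B k := by
  unfold qprEntry
  by_cases h1 : QPAllNonzero B k
  · rw [if_pos h1]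
    exact ⟨fun h => absurd h (by decide), fun ⟨hna, _⟩ => absurd h1 hna⟩
  · rw [if_neg h1]
    by_cases h2 : QPAllZero B k
    · rw [if_pos h2]
      exact ⟨fun h => absurd h (by decide), fun ⟨_, hnz⟩ => absurd h2 hnz⟩
    · rw [if_neg h2]
      exact ⟨fun _ => ⟨h1, h2⟩, fun _ => rfl⟩

lemma isQPPair_irrel {X : Type*} {i1 i2 : DecidableEq X} {k : ℕ} {s t : Finset X}
    (h : @IsQPPair X i1 k s t) : @IsQPPair X i2 k s t := by
  obtain ⟨h1, h2, h3⟩ := h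
  refine ⟨h1, h2, le_trans h3 ?_⟩
  apply Finset.card_le_card
  intro u hu
  exact (@Finset.mem_inter X i2 u s t).2 ((@Finset.mem_inter X i1 u s t).1 hu)

lemma isQPPair_symm {k : ℕ} {s t : Finset A} (h : IsQPPair k s t) : IsQPPair k t s := by
  obtain ⟨h1, h2, h3⟩ := h
  exact ⟨h2, h1, by rwa [Finset.inter_comm]⟩

end Entry

section Transfer

variable {n : ℕ}

lemma isQPPair_map {k : ℕ} {α₀ β₀ : Finset (Fin n)} (h : IsQPPair k α₀ β₀) :
    IsQPPair k (α₀.map Fin.castSuccEmb) (β₀.map Fin.castSuccEmb) := by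
  obtain ⟨h1, h2, h3⟩ := h
  refine ⟨by rw [Finset.card_map, h1], by rw [Finset.card_map, h2], ?_⟩
  have hsub : (α₀ ∩ β₀).map Fin.castSuccEmb ⊆
      α₀.map Fin.castSuccEmb ∩ β₀.map Fin.castSuccEmb := by
    intro u hu
    obtain ⟨a, ha, rfl⟩ := Finset.mem_map.1 hu
    have h4 := Finset.mem_inter.1 ha
    exact Finset.mem_inter.2 ⟨Finset.mem_map_of_mem _ h4.1, Finset.mem_map_of_mem _ h4.2⟩
  have h5 := Finset.card_le_card hsub
  rw [Finset.card_map] at h5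
  omega

lemma isQPPair_unmap {k : ℕ} {α₀ β₀ : Finset (Fin n)}
    (h : IsQPPair k (α₀.map Fin.castSuccEmb) (β₀.map Fin.castSuccEmb)) :
    IsQPPair k α₀ β₀ := by
  obtain ⟨h1, h2, h3⟩ := h
  rw [Finset.card_map] at h1 h2
  refine ⟨h1, h2, ?_⟩
  have hsub : α₀.map Fin.castSuccEmb ∩ β₀.map Fin.castSuccEmb ⊆
      (α₀ ∩ β₀).map Fin.castSuccEmb := by
    intro u hu
    have h4 := Finset.mem_inter.1 hu
    obtain ⟨a, ha, rfl⟩ := Finset.mem_map.1 h4.1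
    obtain ⟨a', ha', haa⟩ := Finset.mem_map.1 h4.2
    have haa' : a' = a := Fin.castSucc_injective n haa
    exact Finset.mem_map_of_mem _ (Finset.mem_inter.2 ⟨ha, haa' ▸ ha'⟩)
  have h5 := Finset.card_le_card hsub
  rw [Finset.card_map] at h5
  omega

end Transfer

/-- over a field of characteristic 0, if `B` is an `n × n` symmetric matrix
with `qpr(B) = q_1 ⋯ q_{n-1} A` and `q_k ∈ {A, S}` for `k = 1, …, n-1`, then there is an
`(n+1) × (n+1)` symmetric matrix `B'` with `qpr(B') = q_1 ⋯ q_{n-1} A A`. -/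
theorem stmt_9 {F : Type*} [Field F] [CharZero F] {n : ℕ} (hn : 0 < n)
    (B : Matrix (Fin n) (Fin n) F) (hB : B.IsSymm)
    (hAS : ∀ k : ℕ, 1 ≤ k → k ≤ n - 1 →
      qprEntry B k = QPR.A ∨ qprEntry B k = QPR.S)
    (hlast : qprEntry B n = QPR.A) :
    ∃ B' : Matrix (Fin (n + 1)) (Fin (n + 1)) F, B'.IsSymm ∧
      (∀ k : ℕ, 1 ≤ k → k ≤ n - 1 → qprEntry B' k = qprEntry B k) ∧
      qprEntry B' n = QPR.A ∧ qprEntry B' (n + 1) = QPR.A := by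
  classical
  have hallN : QPAllNonzero B n := qprEntry_eq_A_iff.1 hlast
  obtain ⟨x, b, hkey⟩ := exists_good_vector B
  have hnz : ∀ k : ℕ, k ≤ n → QPAllNonzero B k →
      QPAllNonzero (borderMat B x x b) k := by
    intro k hkn hall α β hqp
    by_cases hlα : Fin.last n ∈ α
    · by_cases hlβ : Fin.last n ∈ β
      · exact hkey α β (witness_both B hall hkn (isQPPair_irrel hqp) hlα hlβ)
      · exact hkey α β (witness_row B hall (isQPPair_irrel hqp) hlα hlβ)
    · by_cases hlβ : Fin.last n ∈ β
      · apply hkey α β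
        obtain ⟨x', b', hx'⟩ := witness_row B hall (isQPPair_irrel (isQPPair_symm hqp)) hlβ hlα
        refine ⟨x', b', ?_⟩
        rw [qMinor_symm (borderMat_isSymm hB x' b') α β]
        exact hx'
      · obtain ⟨α₀, rfl⟩ := decomp_not_last hlα
        obtain ⟨β₀, rfl⟩ := decomp_not_last hlβ
        rw [qMinor_border_embed]
        exact hall α₀ β₀ (isQPPair_irrel (isQPPair_unmap (isQPPair_irrel hqp)))
  refine ⟨borderMat B x x b, borderMat_isSymm hB x b, ?_, ?_, ?_⟩
  · intro k hk1 hk2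
    rcases hAS k hk1 hk2 with hA | hS'
    · rw [hA]
      exact qprEntry_eq_A_iff.2 (hnz k (by omega) (qprEntry_eq_A_iff.1 hA))
    · rw [hS']
      obtain ⟨hnall, hnzero⟩ := qprEntry_eq_S_iff.1 hS'
      apply qprEntry_eq_S_iff.2
      constructor
      · intro hcon
        apply hnall
        intro α₀ β₀ hqp
        rw [← qMinor_border_embed B x b α₀ β₀]
        exact hcon _ _ (isQPPair_irrel (isQPPair_map (isQPPair_irrel hqp)))
      · intro hcon
        apply hnzero
        intro α₀ β₀ hqp
        rw [← qMinor_border_embed B x b α₀ β₀]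
        exact hcon _ _ (isQPPair_irrel (isQPPair_map (isQPPair_irrel hqp)))
  · exact qprEntry_eq_A_iff.2 (hnz n le_rfl hallN)
  · apply qprEntry_eq_A_iff.2
    intro α β hqp
    obtain ⟨h1, h2, h3⟩ := hqp
    have hα : α = Finset.univ := Finset.eq_univ_of_card α (by rw [h1, Fintype.card_fin])
    have hβ : β = Finset.univ := Finset.eq_univ_of_card β (by rw [h2, Fintype.card_fin])
    subst hα
    subst hβ
    exact hkey _ _ (witness_univ B hallN)
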